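/- Let p be a prime number, l a positive integer, and α a type with decidable equality. Let s be a multiset over α with exactly p^l elements that is not homogeneous. Then p divides the number of lists over α whose underlying multiset equals s. -/

import Mathlib

theorem prime_dvd_card_lists_of_not_homogeneous {α : Type*} [DecidableEq α]
    (p : ℕ) (hp : p.Prime) (l : ℕ) (hl : 1 ≤ l) (s : Multiset α)
    (hcard : Multiset.card s = p ^ l)
    (hnothom : ¬ ∃ (n : ℕ) (a : α), s = Multiset.replicate n a) :
    p ∣ Nat.card {L : List α // (L : Multiset α) = s} := by
  classical
  haveI : Fact p.Prime := ⟨hp⟩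
  have hpl1 : 1 < p ^ l := Nat.one_lt_pow (by omega) hp.one_lt
  haveI : NeZero (p ^ l) := ⟨by omega⟩
  letI : Fintype {L : List α // (L : Multiset α) = s} :=
    Fintype.subtype (Multiset.lists s).toFinset fun L => Multiset.mem_toFinset.trans ((Multiset.mem_lists_iff s L).trans eq_comm)
  haveI : Finite {L : List α // (L : Multiset α) = s} := Finite.of_fintype _
  have hlen : ∀ L : {L : List α // (L : Multiset α) = s}, L.1.length = p ^ l := by
    intro L
    rw [← Multiset.coe_card, L.2, hcard]
  letI : SMul (Multiplicative (ZMod (p ^ l))) {L : List α // (L : Multiset α) = s} :=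
    ⟨fun g L => ⟨L.1.rotate g.toAdd.val,
      (Multiset.coe_eq_coe.mpr (L.1.rotate_perm _)).trans L.2⟩⟩
  have smul_def : ∀ (g : Multiplicative (ZMod (p ^ l)))
      (L : {L : List α // (L : Multiset α) = s}),
      (g • L).1 = L.1.rotate g.toAdd.val := fun _ _ => rfl
  letI : MulAction (Multiplicative (ZMod (p ^ l))) {L : List α // (L : Multiset α) = s} :=
    { one_smul := by
        intro L
        apply Subtype.ext
        rw [smul_def]
        show L.1.rotate (ZMod.val (0 : ZMod (p ^ l))) = L.1
        rw [ZMod.val_zero, List.rotate_zero]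
      mul_smul := by
        intro a b L
        apply Subtype.ext
        rw [smul_def, smul_def, smul_def, List.rotate_rotate]
        show L.1.rotate (ZMod.val (a.toAdd + b.toAdd)) = _
        have hm := List.rotate_mod L.1 (a.toAdd.val + b.toAdd.val)
        rw [hlen L] at hm
        rw [ZMod.val_add, hm, Nat.add_comm] }
  have hPG : IsPGroup p (Multiplicative (ZMod (p ^ l))) := by
    apply IsPGroup.of_card (n := l)
    simp [Nat.card_eq_fintype_card]
  have hfix : Nat.card
      (MulAction.fixedPoints (Multiplicative (ZMod (p ^ l)))
        {L : List α // (L : Multiset α) = s}) = 0 := by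
    rw [Nat.card_eq_zero]
    left
    refine ⟨fun x => ?_⟩
    obtain ⟨⟨L, hL⟩, hfixed⟩ := x
    have hne : Nonempty α := by
      have : 0 < Multiset.card s := by omega
      obtain ⟨a, _⟩ := Multiset.card_pos_iff_exists_mem.mp this
      exact ⟨a⟩
    have h1 := hfixed (Multiplicative.ofAdd (1 : ZMod (p ^ l)))
    have h1' : L.rotate 1 = L := by
      haveI : Fact (1 < p ^ l) := ⟨hpl1⟩
      have h2 := congrArg Subtype.val h1
      rw [smul_def] at h2
      simp only [toAdd_ofAdd, ZMod.val_one] at h2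
      exact h2
    obtain ⟨a, ha⟩ := List.rotate_one_eq_self_iff_eq_replicate.mp h1'
    refine hnothom ⟨L.length, a, ?_⟩
    rw [← hL]
    conv_lhs => rw [ha]
    exact Multiset.coe_replicate _ _
  have := hPG.card_modEq_card_fixedPoints {L : List α // (L : Multiset α) = s}
  rw [hfix] at this
  exact (Nat.modEq_zero_iff_dvd).mp this
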